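/- In the setting of the two-target Fisher analysis, suppose additionally that ⟨g₁, g₂⟩ = 0, ⟨g₁, d₂⟩ = 0, ⟨g₂, d₁⟩ = 0, and ⟨d₁, d₂⟩ = 0. Then the equivalent Fisher information of the fifth parameter equals F = (4 |α₁|² / σ²) ‖d₁‖² (1 − C(g₁, d₁)); that is, there is no information loss about the first target due to the second target. -/

import Mathlib

open Matrix

/-- The coherence of two vectors in ℂ^N. -/
noncomputable def coh {N : ℕ} (g k : EuclideanSpace ℂ (Fin N)) : ℝ :=
  ‖(inner ℂ g k)‖ ^ 2 / (‖g‖ ^ 2 * ‖k‖ ^ 2)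

theorem equivalent_fisher_information_no_loss {N : ℕ}
    (g₁ g₂ d₁ d₂ : EuclideanSpace ℂ (Fin N)) (α₁ α₂ : ℂ) (σ : ℝ)
    (hα₁ : α₁ ≠ 0) (hα₂ : α₂ ≠ 0) (h₁ : g₁ ≠ 0) (h₂ : g₂ ≠ 0)
    (hli : LinearIndependent ℂ ![g₁, g₂]) (hd₁ : d₁ ≠ 0) (hd₂ : d₂ ≠ 0) (hσ : 0 < σ)
    -- the additional orthogonality assumptions
    (hg₁g₂ : (inner ℂ g₁ g₂) = 0) (hg₁d₂ : (inner ℂ g₁ d₂) = 0)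
    (hg₂d₁ : (inner ℂ g₂ d₁) = 0) (hd₁d₂ : (inner ℂ d₁ d₂) = 0) :
    -- the six columns of the Jacobian of the noiseless signal μ = α₁ g₁ + α₂ g₂
    let u : Fin 6 → EuclideanSpace ℂ (Fin N) :=
      ![g₁, g₂, Complex.I • g₁, Complex.I • g₂, α₁ • d₁, α₂ • d₂]
    -- the 6×6 real Fisher information matrix
    let M : Matrix (Fin 6) (Fin 6) ℝ :=
      Matrix.of fun p q => (4 / σ ^ 2) * (inner ℂ (u p) (u q)).re
    -- the embedding of the index set J = {1,2,3,4,6} (deleting the fifth index)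
    let e : Fin 5 → Fin 6 := (4 : Fin 6).succAbove
    -- the 5×5 principal submatrix M_{J,J}
    let A : Matrix (Fin 5) (Fin 5) ℝ := M.submatrix e e
    IsUnit A →
    -- the equivalent Fisher information (Schur complement) of the fifth parameter
    M 4 4 - (fun i => M 4 (e i)) ⬝ᵥ A⁻¹.mulVec (fun j => M (e j) 4)
      = (4 * ‖α₁‖ ^ 2 / σ ^ 2) * (‖d₁‖ ^ 2 * (1 - coh g₁ d₁)) := by
  intro u M e A hA
  have hg₂g₁ : (inner ℂ g₂ g₁ : ℂ) = 0 := by rw [← inner_conj_symm, hg₁g₂, map_zero]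
  have hd₂g₁ : (inner ℂ d₂ g₁ : ℂ) = 0 := by rw [← inner_conj_symm, hg₁d₂, map_zero]
  have hd₁g₂ : (inner ℂ d₁ g₂ : ℂ) = 0 := by rw [← inner_conj_symm, hg₂d₁, map_zero]
  have hd₂d₁ : (inner ℂ d₂ d₁ : ℂ) = 0 := by rw [← inner_conj_symm, hd₁d₂, map_zero]
  have hng₁ : ‖g₁‖ ≠ 0 := norm_ne_zero_iff.mpr h₁
  have hnd₁ : ‖d₁‖ ≠ 0 := norm_ne_zero_iff.mpr hd₁
  have hσ2 : σ ^ 2 ≠ 0 := pow_ne_zero 2 (ne_of_gt hσ)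
  set β : ℂ := α₁ * (inner ℂ g₁ d₁ : ℂ) with hβ
  set s : ℝ := 4 / σ ^ 2 with hs
  have hgg : (inner ℂ g₁ g₁ : ℂ) = (‖g₁‖ : ℂ) ^ 2 := inner_self_eq_norm_sq_to_K g₁
  have hdd : (inner ℂ d₁ d₁ : ℂ) = (‖d₁‖ : ℂ) ^ 2 := inner_self_eq_norm_sq_to_K d₁
  -- candidate solution vector
  set x : Fin 5 → ℝ := ![β.re / ‖g₁‖ ^ 2, 0, β.im / ‖g₁‖ ^ 2, 0, 0] with hxdef
  have hx0 : x 0 = β.re / ‖g₁‖ ^ 2 := rfl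
  have hx1 : x 1 = 0 := rfl
  have hx2 : x 2 = β.im / ‖g₁‖ ^ 2 := rfl
  have hx3 : x 3 = 0 := rfl
  have hx4 : x 4 = 0 := rfl
  -- entries of A in columns 0 and 2
  have hA00 : A 0 0 = s * ‖g₁‖ ^ 2 := by
    show s * ((inner ℂ g₁ g₁ : ℂ)).re = _
    rw [hgg, ← Complex.ofReal_pow, Complex.ofReal_re]
  have hA10 : A 1 0 = 0 := by
    show s * ((inner ℂ g₂ g₁ : ℂ)).re = _
    rw [hg₂g₁]; simp
  have hA20 : A 2 0 = 0 := by
    show s * ((inner ℂ (Complex.I • g₁) g₁ : ℂ)).re = _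
    rw [inner_smul_left, hgg, ← Complex.ofReal_pow, Complex.conj_I]
    simp [Complex.mul_re, Complex.mul_im, -Complex.ofReal_pow]
  have hA30 : A 3 0 = 0 := by
    show s * ((inner ℂ (Complex.I • g₂) g₁ : ℂ)).re = _
    rw [inner_smul_left, hg₂g₁]; simp
  have hA40 : A 4 0 = 0 := by
    show s * ((inner ℂ (α₂ • d₂) g₁ : ℂ)).re = _
    rw [inner_smul_left, hd₂g₁]; simp
  have hA02 : A 0 2 = 0 := by
    show s * ((inner ℂ g₁ (Complex.I • g₁) : ℂ)).re = _
    rw [inner_smul_right, hgg, ← Complex.ofReal_pow]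
    simp [Complex.mul_re, Complex.mul_im, -Complex.ofReal_pow]
  have hA12 : A 1 2 = 0 := by
    show s * ((inner ℂ g₂ (Complex.I • g₁) : ℂ)).re = _
    rw [inner_smul_right, hg₂g₁]; simp
  have hA22 : A 2 2 = s * ‖g₁‖ ^ 2 := by
    show s * ((inner ℂ (Complex.I • g₁) (Complex.I • g₁) : ℂ)).re = _
    rw [inner_smul_left, inner_smul_right, hgg, ← Complex.ofReal_pow, Complex.conj_I]
    simp [Complex.mul_re, Complex.mul_im, -Complex.ofReal_pow]
  have hA32 : A 3 2 = 0 := by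
    show s * ((inner ℂ (Complex.I • g₂) (Complex.I • g₁) : ℂ)).re = _
    rw [inner_smul_left, inner_smul_right, hg₂g₁]; simp
  have hA42 : A 4 2 = 0 := by
    show s * ((inner ℂ (α₂ • d₂) (Complex.I • g₁) : ℂ)).re = _
    rw [inner_smul_left, inner_smul_right, hd₂g₁]; simp
  -- the column c j = M (e j) 4
  have hc0 : M (e 0) 4 = s * β.re := by
    show s * ((inner ℂ g₁ (α₁ • d₁) : ℂ)).re = _
    rw [inner_smul_right]
  have hc1 : M (e 1) 4 = 0 := by
    show s * ((inner ℂ g₂ (α₁ • d₁) : ℂ)).re = _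
    rw [inner_smul_right, hg₂d₁]; simp
  have hc2 : M (e 2) 4 = s * β.im := by
    show s * ((inner ℂ (Complex.I • g₁) (α₁ • d₁) : ℂ)).re = _
    rw [inner_smul_left, inner_smul_right, Complex.conj_I, ← hβ]
    simp [Complex.mul_re, Complex.mul_im]
  have hc3 : M (e 3) 4 = 0 := by
    show s * ((inner ℂ (Complex.I • g₂) (α₁ • d₁) : ℂ)).re = _
    rw [inner_smul_left, inner_smul_right, hg₂d₁]; simp
  have hc4 : M (e 4) 4 = 0 := by
    show s * ((inner ℂ (α₂ • d₂) (α₁ • d₁) : ℂ)).re = _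
    rw [inner_smul_left, inner_smul_right, hd₂d₁]; simp
  -- the row b i = M 4 (e i)
  have hb0 : M 4 (e 0) = s * β.re := by
    show s * ((inner ℂ (α₁ • d₁) g₁ : ℂ)).re = _
    have hdg : (inner ℂ d₁ g₁ : ℂ) = (starRingEnd ℂ) (inner ℂ g₁ d₁ : ℂ) := by
      rw [inner_conj_symm]
    rw [inner_smul_left, hdg, ← _root_.map_mul, ← hβ, Complex.conj_re]
  have hb1 : M 4 (e 1) = 0 := by
    show s * ((inner ℂ (α₁ • d₁) g₂ : ℂ)).re = _
    rw [inner_smul_left, hd₁g₂]; simp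
  have hb2 : M 4 (e 2) = s * β.im := by
    show s * ((inner ℂ (α₁ • d₁) (Complex.I • g₁) : ℂ)).re = _
    have hdg : (inner ℂ d₁ g₁ : ℂ) = (starRingEnd ℂ) (inner ℂ g₁ d₁ : ℂ) := by
      rw [inner_conj_symm]
    rw [inner_smul_left, inner_smul_right, hdg, show (starRingEnd ℂ) α₁ * (Complex.I * (starRingEnd ℂ) (inner ℂ g₁ d₁ : ℂ)) = Complex.I * (starRingEnd ℂ) β from by rw [hβ, _root_.map_mul]; ring]
    simp [Complex.mul_re]
  have hb3 : M 4 (e 3) = 0 := by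
    show s * ((inner ℂ (α₁ • d₁) (Complex.I • g₂) : ℂ)).re = _
    rw [inner_smul_left, inner_smul_right, hd₁g₂]; simp
  have hb4 : M 4 (e 4) = 0 := by
    show s * ((inner ℂ (α₁ • d₁) (α₂ • d₂) : ℂ)).re = _
    rw [inner_smul_left, inner_smul_right, hd₁d₂]; simp
  -- the rows of A.mulVec x
  have hrow : ∀ j, A.mulVec x j = M (e j) 4 := by
    have h0 : A.mulVec x 0 = M (e 0) 4 := by
      simp only [Matrix.mulVec, dotProduct, Fin.sum_univ_five, hx0, hx1, hx2, hx3, hx4,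
        hA00, hA02, hc0, mul_zero, add_zero, zero_add, zero_mul]
      field_simp
    have h1 : A.mulVec x 1 = M (e 1) 4 := by
      simp only [Matrix.mulVec, dotProduct, Fin.sum_univ_five, hx0, hx1, hx2, hx3, hx4,
        hA10, hA12, hc1, mul_zero, add_zero, zero_add, zero_mul]
    have h2 : A.mulVec x 2 = M (e 2) 4 := by
      simp only [Matrix.mulVec, dotProduct, Fin.sum_univ_five, hx0, hx1, hx2, hx3, hx4,
        hA20, hA22, hc2, mul_zero, add_zero, zero_add, zero_mul]
      field_simp
    have h3 : A.mulVec x 3 = M (e 3) 4 := by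
      simp only [Matrix.mulVec, dotProduct, Fin.sum_univ_five, hx0, hx1, hx2, hx3, hx4,
        hA30, hA32, hc3, mul_zero, add_zero, zero_add, zero_mul]
    have h4 : A.mulVec x 4 = M (e 4) 4 := by
      simp only [Matrix.mulVec, dotProduct, Fin.sum_univ_five, hx0, hx1, hx2, hx3, hx4,
        hA40, hA42, hc4, mul_zero, add_zero, zero_add, zero_mul]
    intro j
    fin_cases j
    exacts [h0, h1, h2, h3, h4]
  have hsolve : A.mulVec x = fun j => M (e j) 4 := funext hrow
  have hAdet : IsUnit A.det := (Matrix.isUnit_iff_isUnit_det A).mp hA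
  have hinv : A⁻¹.mulVec (fun j => M (e j) 4) = x := by
    rw [← hsolve, Matrix.mulVec_mulVec, Matrix.nonsing_inv_mul A hAdet, Matrix.one_mulVec]
  rw [hinv]
  have hdot : (fun i => M 4 (e i)) ⬝ᵥ x = s * (β.re ^ 2 + β.im ^ 2) / ‖g₁‖ ^ 2 := by
    simp only [dotProduct, Fin.sum_univ_five, hx0, hx1, hx2, hx3, hx4,
      hb0, hb1, hb2, hb3, hb4, mul_zero, add_zero, zero_add, zero_mul]
    field_simp
  rw [hdot]
  have hM44 : M 4 4 = s * (‖α₁‖ ^ 2 * ‖d₁‖ ^ 2) := by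
    show s * ((inner ℂ (α₁ • d₁) (α₁ • d₁) : ℂ)).re = _
    have key : ((starRingEnd ℂ) α₁ * (α₁ * ((‖d₁‖ ^ 2 : ℝ) : ℂ))).re
        = ‖α₁‖ ^ 2 * ‖d₁‖ ^ 2 := by
      simp [Complex.mul_re, Complex.mul_im, -Complex.ofReal_pow,
        Complex.sq_norm, Complex.normSq_apply]
      ring
    rw [inner_smul_left, inner_smul_right, hdd, ← Complex.ofReal_pow, key]
  rw [hM44]
  have hβsq : β.re ^ 2 + β.im ^ 2 = ‖α₁‖ ^ 2 * ‖(inner ℂ g₁ d₁ : ℂ)‖ ^ 2 := by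
    have h1 : β.re ^ 2 + β.im ^ 2 = ‖β‖ ^ 2 := by
      rw [Complex.sq_norm, Complex.normSq_apply]; ring
    rw [h1, hβ, norm_mul, mul_pow]
  rw [hβsq, coh]
  rw [show (4 : ℝ) * ‖α₁‖ ^ 2 / σ ^ 2 = s * ‖α₁‖ ^ 2 by rw [hs]; ring]
  field_simp
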